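/- If L ≥ 0 is a constant such that |μ(S) − μ(S*)| ≤ L·|S − S*| for all S ∈ [0,S_in], then |g(z) − 1| ≤ A·|e^z − 1| for all z ∈ ℝ, where A := L·p0·S*/(b + D*). -/

import Mathlib

/-- If |μ(S) − μ(S*)| ≤ L·|S − S*| on [0,S_in], then
|g(z) − 1| ≤ A·|e^z − 1| for all z ∈ ℝ, where A := L·p0·S*/(b + D*). -/
theorem stmt_6
    (S_in Sstar p0 b Dstar : ℝ) (μ : ℝ → ℝ)
    (hSin : 0 < S_in) (hSstar : Sstar ∈ Set.Ioo 0 S_in)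
    (hp0 : 0 < p0) (hb : 0 ≤ b) (hDstar : 0 < Dstar)
    (hμ_bdd : BddAbove (Set.range μ))
    (hμ_C1 : ContDiffOn ℝ 1 μ (Set.Ici 0))
    (hμ_nonneg : ∀ S, 0 ≤ S → 0 ≤ μ S)
    (hμ_zero : μ 0 = 0) (hμ_pos : ∀ S, 0 < S → 0 < μ S)
    (heq : p0 * μ Sstar = b + Dstar)
    (κ : ℝ) (hκ : κ = (S_in - Sstar) / Sstar)
    (p g : ℝ → ℝ)
    (hp : ∀ z, p z = κ * Real.exp (-z) + 1)
    (hg : ∀ z, g z = μ (S_in / p z) / μ Sstar)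
    (L : ℝ) (hL : 0 ≤ L)
    (hLip : ∀ S ∈ Set.Icc (0 : ℝ) S_in, |μ S - μ Sstar| ≤ L * |S - Sstar|)
    (A : ℝ) (hA : A = L * p0 * Sstar / (b + Dstar)) :
    ∀ z : ℝ, |g z - 1| ≤ A * |Real.exp z - 1| := by
  intro z
  obtain ⟨hS0, hSlt⟩ := hSstar
  have hκpos : 0 < κ := by rw [hκ]; exact div_pos (by linarith) hS0
  have hexp : 0 < Real.exp (-z) := Real.exp_pos _
  have hppos : 0 < p z := by rw [hp]; positivity
  have hμS : 0 < μ Sstar := hμ_pos _ hS0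
  set S := S_in / p z with hS
  have hSpos : 0 < S := div_pos hSin hppos
  have hSle : S ≤ S_in := by
    have hp1 : 1 ≤ p z := by rw [hp]; nlinarith
    rw [hS, div_le_iff₀ hppos]
    nlinarith
  have hSin_eq : S_in = Sstar * (κ + 1) := by
    rw [hκ]; field_simp; ring
  have hdiff : S - Sstar = Sstar * (κ * Real.exp (-z) / p z) * (Real.exp z - 1) := by
    have hez : Real.exp z ≠ 0 := (Real.exp_pos z).ne'
    rw [hS, hp z, hSin_eq, Real.exp_neg]
    field_simp
    ring
  have hfac : κ * Real.exp (-z) / p z ≤ 1 := by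
    rw [div_le_one hppos, hp]; linarith
  have hkey : |S - Sstar| ≤ Sstar * |Real.exp z - 1| := by
    calc |S - Sstar| = Sstar * (κ * Real.exp (-z) / p z) * |Real.exp z - 1| := by
          rw [hdiff, abs_mul, abs_of_nonneg (by positivity)]
      _ ≤ Sstar * 1 * |Real.exp z - 1| := by
          gcongr
      _ = Sstar * |Real.exp z - 1| := by ring
  have hA' : A = L * Sstar / μ Sstar := by
    rw [hA, ← heq]
    field_simp
  have hg1 : g z - 1 = (μ S - μ Sstar) / μ Sstar := by
    rw [hg]
    field_simp
    rfl
  rw [hg1, abs_div, abs_of_pos hμS, div_le_iff₀ hμS, hA']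
  calc |μ S - μ Sstar| ≤ L * |S - Sstar| := hLip S ⟨hSpos.le, hSle⟩
    _ ≤ L * (Sstar * |Real.exp z - 1|) := by
        exact mul_le_mul_of_nonneg_left hkey hL
    _ = L * Sstar / μ Sstar * |Real.exp z - 1| * μ Sstar := by
        field_simp
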